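/- arXiv:1811.06459 — 2 statements merged into one kernel-verified Lean document; each statement's English description precedes it below -/
import Mathlib

section
/- The sentence φ_k is hereditary over the class of all finite τ-structures: for every finite τ-structure 𝔄 satisfying φ_k and every substructure 𝔅 of 𝔄, the structure 𝔅 satisfies φ_k. Equivalently, ¬φ_k is extension closed over finite τ-structures: if a finite τ-structure 𝔄 satisfies ¬φ_k and 𝔅 is a finite extension of 𝔄 (i.e., 𝔄 is a substructure of 𝔅), then 𝔅 satisfies ¬φ_k. -/
open FirstOrder Language

namespace LTFinite

/-- Relation symbols of the vocabulary `τ = {≤, S, P, c, d}`: binary `≤` and `S`, unary `P`. -/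
inductive TauRel : ℕ → Type
  | le : TauRel 2
  | succ : TauRel 2
  | pelt : TauRel 1

/-- Function symbols of `τ`: the constants `c` and `d`. -/
inductive TauFun : ℕ → Type
  | c : TauFun 0
  | d : TauFun 0

/-- The vocabulary `τ = {≤, S, P, c, d}`. -/
def tau : FirstOrder.Language := ⟨TauFun, TauRel⟩

/-- The atomic formula `t₁ ≤ t₂`. -/
def leF {n : ℕ} (t₁ t₂ : tau.Term (Empty ⊕ Fin n)) : tau.BoundedFormula Empty n :=
  Relations.boundedFormula₂ (TauRel.le : tau.Relations 2) t₁ t₂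

/-- The atomic formula `S(t₁, t₂)`. -/
def sF {n : ℕ} (t₁ t₂ : tau.Term (Empty ⊕ Fin n)) : tau.BoundedFormula Empty n :=
  Relations.boundedFormula₂ (TauRel.succ : tau.Relations 2) t₁ t₂

/-- The atomic formula `P(t)`. -/
def pF {n : ℕ} (t : tau.Term (Empty ⊕ Fin n)) : tau.BoundedFormula Empty n :=
  Relations.boundedFormula₁ (TauRel.pelt : tau.Relations 1) t

/-- The constant term `c`. -/
def cT {n : ℕ} : tau.Term (Empty ⊕ Fin n) := Constants.term TauFun.c

/-- The constant term `d`. -/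
def dT {n : ℕ} : tau.Term (Empty ⊕ Fin n) := Constants.term TauFun.d

/-- `ξ₁`: `≤` is a (reflexive) linear order. -/
def xi1 : tau.Sentence :=
  ∀' ∀' ∀' ((leF &0 &0) ⊓ (((leF &0 &1) ⊓ (leF &1 &2)) ⟹ (leF &0 &2)) ⊓
    (((leF &0 &1) ⊓ (leF &1 &0)) ⟹ Term.bdEqual (&0) (&1)) ⊓ ((leF &0 &1) ⊔ (leF &1 &0)))

/-- `ξ₂`: `c` is minimum and `d` is maximum under `≤`. -/
def xi2 : tau.Sentence :=
  ∀' ((leF cT &0) ⊓ (leF &0 dT))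

/-- `ξ₃`: `S(x, y)` implies that `y` is the successor of `x` under `≤`. -/
def xi3 : tau.Sentence :=
  ∀' ∀' ∀' ((sF &0 &1) ⟹
    ((leF &0 &1) ⊓ ∼(Term.bdEqual (&0) (&1)) ⊓ ((leF &0 &2) ⟹ ((Term.bdEqual (&2) (&0)) ⊔ (leF &1 &2)))))

/-- `ξ₄`: every element other than `d` has an `S`-successor. -/
def xi4 : tau.Sentence :=
  ∀' ((∼(Term.bdEqual (&0) dT)) ⟹ ∃' (sF &0 &1))

/-- `ξ₅ k`: at most `k` elements satisfy `P`. -/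
def xi5 (k : ℕ) : tau.Sentence :=
  ((List.ofFn fun i : Fin (k + 1) => pF (Term.var (Sum.inr i))).foldr (· ⊓ ·) ⊤ ⟹
      (((List.finRange (k + 1) ×ˢ List.finRange (k + 1)).filter (fun ij => ij.1 < ij.2)).map
          fun ij => Term.bdEqual (Term.var (Sum.inr ij.1)) (Term.var (Sum.inr ij.2))).foldr
        (· ⊔ ·) ⊥).alls

/-- The sentence `φ_k := (ξ₁ ∧ ξ₂ ∧ ξ₃) ∧ ¬(ξ₄ ∧ ξ₅)`. -/
def phi (k : ℕ) : tau.Sentence :=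
  (xi1 ⊓ xi2 ⊓ xi3) ⊓ ∼(xi4 ⊓ xi5 k)

section Aux

@[simp] theorem snoc3_zero {α : Type*} (f : Fin 0 → α) (a b c : α) :
    (Fin.snoc (Fin.snoc (Fin.snoc f a) b) c : Fin 3 → α) 0 = a := rfl

@[simp] theorem snoc3_one {α : Type*} (f : Fin 0 → α) (a b c : α) :
    (Fin.snoc (Fin.snoc (Fin.snoc f a) b) c : Fin 3 → α) 1 = b := rfl

@[simp] theorem snoc3_two {α : Type*} (f : Fin 0 → α) (a b c : α) :
    (Fin.snoc (Fin.snoc (Fin.snoc f a) b) c : Fin 3 → α) 2 = c := rfl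

@[simp] theorem snoc1_zero {α : Type*} (f : Fin 0 → α) (a : α) :
    (Fin.snoc f a : Fin 1 → α) 0 = a := rfl

@[simp] theorem snoc2_zero {α : Type*} (f : Fin 0 → α) (a b : α) :
    (Fin.snoc (Fin.snoc f a) b : Fin 2 → α) 0 = a := rfl

@[simp] theorem snoc2_one {α : Type*} (f : Fin 0 → α) (a b : α) :
    (Fin.snoc (Fin.snoc f a) b : Fin 2 → α) 1 = b := rfl

variable {M : Type} [tau.Structure M]

/-- The interpretation of `≤`. -/
def rle (a b : M) : Prop := Structure.RelMap (L := tau) TauRel.le ![a, b]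

/-- The interpretation of `S`. -/
def rsucc (a b : M) : Prop := Structure.RelMap (L := tau) TauRel.succ ![a, b]

/-- The interpretation of `c`. -/
def ec (M : Type) [tau.Structure M] : M := constantMap (L := tau) (M := M) TauFun.c

/-- The interpretation of `d`. -/
def ed (M : Type) [tau.Structure M] : M := constantMap (L := tau) (M := M) TauFun.d

theorem realize_le2 {n : ℕ} {v : Empty → M} {xs : Fin n → M} {t₁ t₂ : tau.Term (Empty ⊕ Fin n)} :
    (Relations.boundedFormula₂ (TauRel.le : tau.Relations 2) t₁ t₂).Realize v xs ↔
      Structure.RelMap (L := tau) TauRel.le ![t₁.realize (Sum.elim v xs), t₂.realize (Sum.elim v xs)] :=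
  BoundedFormula.realize_rel₂

theorem realize_succ2 {n : ℕ} {v : Empty → M} {xs : Fin n → M} {t₁ t₂ : tau.Term (Empty ⊕ Fin n)} :
    (Relations.boundedFormula₂ (TauRel.succ : tau.Relations 2) t₁ t₂).Realize v xs ↔
      Structure.RelMap (L := tau) TauRel.succ ![t₁.realize (Sum.elim v xs), t₂.realize (Sum.elim v xs)] :=
  BoundedFormula.realize_rel₂

theorem realize_cT' {α : Type*} {v : α → M} :
    (Constants.term (L := tau) TauFun.c).realize v = constantMap (L := tau) (M := M) TauFun.c :=
  Term.realize_constants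

theorem realize_dT' {α : Type*} {v : α → M} :
    (Constants.term (L := tau) TauFun.d).realize v = constantMap (L := tau) (M := M) TauFun.d :=
  Term.realize_constants

theorem realize_xi1 : M ⊨ xi1 ↔ ∀ a b c : M,
    rle a a ∧ ((rle a b ∧ rle b c) → rle a c) ∧ ((rle a b ∧ rle b a) → a = b) ∧
      (rle a b ∨ rle b a) := by
  simp only [xi1, leF, rle, Sentence.Realize, Formula.Realize, BoundedFormula.realize_all,
    BoundedFormula.realize_inf, BoundedFormula.realize_imp, BoundedFormula.realize_sup,
    BoundedFormula.realize_rel₂, realize_le2, realize_succ2, BoundedFormula.realize_bdEqual, Term.realize_var,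
    Function.comp, Sum.elim_inr, snoc3_zero, snoc3_one, snoc3_two]
  exact forall_congr' fun a => forall_congr' fun b => forall_congr' fun c => by tauto

theorem realize_xi2 : M ⊨ xi2 ↔ ∀ a : M, rle (ec M) a ∧ rle a (ed M) := by
  simp only [xi2, leF, cT, dT, rle, ec, ed, Sentence.Realize, Formula.Realize,
    BoundedFormula.realize_all, BoundedFormula.realize_inf, BoundedFormula.realize_rel₂, realize_le2, realize_succ2,
    Term.realize_var, Term.realize_constants, realize_cT', realize_dT', Function.comp, Sum.elim_inr, snoc1_zero]

theorem realize_xi3 : M ⊨ xi3 ↔ ∀ a b c : M,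
    rsucc a b → rle a b ∧ ¬(a = b) ∧ (rle a c → (c = a ∨ rle b c)) := by
  simp only [xi3, leF, sF, rle, rsucc, Sentence.Realize, Formula.Realize,
    BoundedFormula.realize_all, BoundedFormula.realize_inf, BoundedFormula.realize_imp,
    BoundedFormula.realize_sup, BoundedFormula.realize_rel₂, realize_le2, realize_succ2, BoundedFormula.realize_not,
    BoundedFormula.realize_bdEqual, Term.realize_var, Function.comp, Sum.elim_inr,
    snoc3_zero, snoc3_one, snoc3_two]
  exact forall_congr' fun a => forall_congr' fun b => forall_congr' fun c => by tauto

theorem realize_xi4 : M ⊨ xi4 ↔ ∀ a : M, ¬(a = ed M) → ∃ b : M, rsucc a b := by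
  simp only [xi4, sF, dT, rsucc, ed, Sentence.Realize, Formula.Realize,
    BoundedFormula.realize_all, BoundedFormula.realize_imp, BoundedFormula.realize_ex,
    BoundedFormula.realize_not, BoundedFormula.realize_rel₂, realize_le2, realize_succ2, BoundedFormula.realize_bdEqual,
    Term.realize_var, Term.realize_constants, realize_cT', realize_dT', Function.comp, Sum.elim_inr,
    snoc1_zero, snoc2_zero, snoc2_one]

variable {N : tau.Substructure M}

theorem pair_eq (a b : N) : (![(a : M), (b : M)] : Fin 2 → M) = N.subtype ∘ ![a, b] :=
  funext fun i => by fin_cases i <;> rfl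

theorem rle_coe (a b : N) : rle a b ↔ rle (a : M) (b : M) := by
  rw [rle, rle, pair_eq]; exact (N.subtype.map_rel _ _).symm

theorem rsucc_coe (a b : N) : rsucc a b ↔ rsucc (a : M) (b : M) := by
  rw [rsucc, rsucc, pair_eq]; exact (N.subtype.map_rel _ _).symm

theorem ec_coe : ((ec N : N) : M) = ec M := N.subtype.map_constants TauFun.c

theorem ed_coe : ((ed N : N) : M) = ed M := N.subtype.map_constants TauFun.d

/-- A total transitive relation on a finite nonempty set has a maximum. -/
theorem exists_max [Finite M] (htr : ∀ a b c : M, rle a b → rle b c → rle a c)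
    (htot : ∀ a b : M, rle a b ∨ rle b a) (T : Set M) (hT : T.Nonempty) :
    ∃ m ∈ T, ∀ x ∈ T, rle x m := by
  classical
  have key : ∀ s : Finset M, s.Nonempty → ∃ m ∈ s, ∀ x ∈ s, rle x m := by
    intro s
    induction s using Finset.induction_on with
    | empty => intro h; exact absurd h (by simp)
    | @insert a s ha ih =>
      intro _
      by_cases hs : s.Nonempty
      · obtain ⟨m, hm, hmax⟩ := ih hs
        by_cases hle : rle a m
        · refine ⟨m, Finset.mem_insert_of_mem hm, fun x hx => ?_⟩
          rcases Finset.mem_insert.1 hx with rfl | hx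
          · exact hle
          · exact hmax x hx
        · have ham : rle m a := (htot a m).resolve_left hle
          refine ⟨a, Finset.mem_insert_self a s, fun x hx => ?_⟩
          rcases Finset.mem_insert.1 hx with rfl | hx
          · exact (htot x x).elim id id
          · exact htr x m a (hmax x hx) ham
      · rw [Finset.not_nonempty_iff_eq_empty] at hs
        subst hs
        refine ⟨a, Finset.mem_insert_self a _, fun x hx => ?_⟩
        rcases Finset.mem_insert.1 hx with rfl | hx
        · exact (htot x x).elim id id
        · exact absurd hx (by simp)
  have hfin : T.Finite := Set.toFinite T
  obtain ⟨m, hm, hmax⟩ := key hfin.toFinset (by rwa [Set.Finite.toFinset_nonempty])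
  exact ⟨m, hfin.mem_toFinset.1 hm, fun x hx => hmax x (hfin.mem_toFinset.2 hx)⟩

/-- Key lemma: in a finite model of `ξ₁ ∧ ξ₂ ∧ ξ₃`, any substructure satisfying `ξ₄`
is the whole structure. -/
theorem substructure_eq_top [Finite M] (h1 : M ⊨ xi1) (h2 : M ⊨ xi2) (h3 : M ⊨ xi3)
    (N : tau.Substructure M) (h4 : (N : Type) ⊨ xi4) : N = ⊤ := by
  rw [realize_xi1] at h1
  rw [realize_xi2] at h2
  rw [realize_xi3] at h3
  rw [realize_xi4] at h4
  have htr : ∀ a b c : M, rle a b → rle b c → rle a c := fun a b c hab hbc =>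
    (h1 a b c).2.1 ⟨hab, hbc⟩
  have hanti : ∀ a b : M, rle a b → rle b a → a = b := fun a b hab hba =>
    (h1 a b a).2.2.1 ⟨hab, hba⟩
  have htot : ∀ a b : M, rle a b ∨ rle b a := fun a b => (h1 a b a).2.2.2
  -- reformulate h4
  have h4' : ∀ a : M, a ∈ N → a ≠ ed M → ∃ b ∈ N, rsucc a b := by
    intro a ha hne
    obtain ⟨b, hb⟩ := h4 ⟨a, ha⟩ (by
      intro h
      apply hne
      have := congrArg (Subtype.val) h
      rwa [ed_coe] at this)
    exact ⟨(b : M), b.2, (rsucc_coe _ _).1 hb⟩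
  -- the downward-closed part of N
  set T : Set M := {x | x ∈ N ∧ ∀ z : M, rle z x → z ∈ N} with hTdef
  have hcmem : ec M ∈ N := N.constants_mem TauFun.c
  have hcT : ec M ∈ T := by
    refine ⟨hcmem, fun z hz => ?_⟩
    have : z = ec M := hanti z (ec M) hz (h2 z).1
    exact this ▸ hcmem
  obtain ⟨m, hmT, hmax⟩ := exists_max htr htot T ⟨_, hcT⟩
  have hmd : m = ed M := by
    by_contra hne
    obtain ⟨y, hyN, hy⟩ := h4' m hmT.1 hne
    have hmy : rle m y := (h3 m y m hy).1
    have hmny : ¬(m = y) := (h3 m y m hy).2.1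
    have hyT : y ∈ T := by
      refine ⟨hyN, fun z hz => ?_⟩
      rcases htot z m with h | h
      · exact hmT.2 z h
      · rcases (h3 m y z hy).2.2 h with h' | h'
        · exact h' ▸ hmT.1
        · exact (hanti z y hz h') ▸ hyN
    exact hmny (hanti m y hmy (hmax y hyT))
  refine SetLike.ext fun x => ⟨fun _ => Substructure.mem_top x, fun _ => ?_⟩
  exact hmT.2 x (hmd ▸ (h2 x).2)

end Aux

theorem realize_phi_iff {M : Type} [tau.Structure M] {k : ℕ} :
    M ⊨ phi k ↔ ((M ⊨ xi1 ∧ M ⊨ xi2) ∧ M ⊨ xi3) ∧ ¬(M ⊨ xi4 ∧ M ⊨ xi5 k) := by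
  simp only [phi, Sentence.Realize, Formula.realize_inf, Formula.realize_not]

theorem main_lemma (k : ℕ) (M : Type) [tau.Structure M] [Finite M] (hM : M ⊨ phi k)
    (N : tau.Substructure M) : (N : Type) ⊨ phi k := by
  obtain ⟨⟨⟨h1, h2⟩, h3⟩, h45⟩ := realize_phi_iff.1 hM
  have h1' := realize_xi1.1 h1
  have h2' := realize_xi2.1 h2
  have h3' := realize_xi3.1 h3
  refine realize_phi_iff.2 ⟨⟨⟨?_, ?_⟩, ?_⟩, ?_⟩
  · rw [realize_xi1]
    intro a b c
    obtain ⟨r1, r2, r3, r4⟩ := h1' (a : M) (b : M) (c : M)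
    refine ⟨(rle_coe a a).2 r1, fun h => (rle_coe a c).2 (r2 ⟨(rle_coe a b).1 h.1,
      (rle_coe b c).1 h.2⟩), fun h => Subtype.ext (r3 ⟨(rle_coe a b).1 h.1,
      (rle_coe b a).1 h.2⟩), ?_⟩
    rcases r4 with h | h
    · exact Or.inl ((rle_coe a b).2 h)
    · exact Or.inr ((rle_coe b a).2 h)
  · rw [realize_xi2]
    intro a
    obtain ⟨r1, r2⟩ := h2' (a : M)
    constructor
    · rw [rle_coe, ec_coe]; exact r1
    · rw [rle_coe, ed_coe]; exact r2
  · rw [realize_xi3]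
    intro a b c hs
    obtain ⟨r1, r2, r3⟩ := h3' (a : M) (b : M) (c : M) ((rsucc_coe a b).1 hs)
    refine ⟨(rle_coe a b).2 r1, fun h => r2 (congrArg Subtype.val h), fun h => ?_⟩
    rcases r3 ((rle_coe a c).1 h) with h' | h'
    · exact Or.inl (Subtype.ext h')
    · exact Or.inr ((rle_coe b c).2 h')
  · rintro ⟨h4, h5⟩
    have hTop : N = ⊤ := substructure_eq_top h1 h2 h3 N h4
    subst hTop
    exact h45 ⟨(StrongHomClass.realize_sentence Substructure.topEquiv xi4).1 h4,
      (StrongHomClass.realize_sentence Substructure.topEquiv (xi5 k)).1 h5⟩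

/-- **`φ_k` is hereditary over the class of all finite `τ`-structures**: every nonempty
substructure of a finite model of `φ_k` is again a model of `φ_k`. Equivalently, `¬φ_k` is
extension closed over finite `τ`-structures: if a nonempty substructure of a finite
`τ`-structure `B` satisfies `¬φ_k`, then so does `B`. -/
theorem phi_hereditary_finite (k : ℕ) :
    (∀ (M : Type) [tau.Structure M] [Finite M] [Nonempty M], M ⊨ phi k →
      ∀ N : tau.Substructure M, (N : Set M).Nonempty → (N : Type) ⊨ phi k) ∧
    (∀ (B : Type) [tau.Structure B] [Finite B] [Nonempty B],
      ∀ N : tau.Substructure B, (N : Set B).Nonempty →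
        (N : Type) ⊨ (∼(phi k) : tau.Sentence) → B ⊨ (∼(phi k) : tau.Sentence)) := by
  constructor
  · intro M _ _ _ hM N _
    exact main_lemma k M hM N
  · intro B _ _ _ N hne hN
    rw [Sentence.realize_not] at hN ⊢
    exact fun hB => hN (main_lemma k B hB N)

end LTFinite
end

section
/- The sentence φ_k is not equivalent over the class of all finite τ-structures to any ∃^k∀* sentence: for every natural number n and every quantifier-free FO(τ) formula β(x₁,…,x_k,y₁,…,y_n), there exists a finite τ-structure that satisfies exactly one of φ_k and the sentence ∃x₁…∃x_k ∀y₁…∀y_n β(x₁,…,x_k,y₁,…,y_n). -/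
open FirstOrder Language

namespace LTFinite

/-- Universally quantify over the last `n` free (de Bruijn) variables of a bounded formula,
leaving the first `k` variables free. -/
def allsFrom (k : ℕ) : ∀ {n : ℕ}, tau.BoundedFormula Empty (k + n) → tau.BoundedFormula Empty k
  | 0, ψ => ψ
  | _ + 1, ψ => allsFrom k ψ.all

/-- The `∃^k∀*` sentence `∃x₁…∃x_k ∀y₁…∀y_n ψ` built from a quantifier-free matrix `ψ`. -/
def existsForallSentence (k n : ℕ) (ψ : tau.BoundedFormula Empty (k + n)) : tau.Sentence :=
  (allsFrom k ψ).exs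

-- Carrier with structure
def Car (L : ℕ) (Q : ℕ → Prop) : Type := Fin (L+1)

namespace Car
variable {L : ℕ} {Q : ℕ → Prop}

def toN (x : Car L Q) : ℕ := (show Fin (L+1) from x).val

lemma toN_lt (x : Car L Q) : toN x < L + 1 := (show Fin (L+1) from x).isLt

def mk (m : ℕ) (h : m < L + 1) : Car L Q := show Fin (L+1) from ⟨m, h⟩

@[simp] lemma toN_mk (m : ℕ) (h : m < L+1) : toN (mk (Q := Q) m h) = m := rfl

lemma ext' {x y : Car L Q} (h : toN x = toN y) : x = y := Fin.ext h

end Car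

instance carStructure (L : ℕ) (Q : ℕ → Prop) : tau.Structure (Car L Q) where
  funMap {l} f _ := match f with
    | TauFun.c => Car.mk 0 (Nat.succ_pos L)
    | TauFun.d => Car.mk L (Nat.lt_succ_self L)
  RelMap {l} r v := match r with
    | TauRel.le => Car.toN (v 0) ≤ Car.toN (v 1)
    | TauRel.succ => Car.toN (v 1) = Car.toN (v 0) + 1
    | TauRel.pelt => Q (Car.toN (v 0))

namespace Car
variable {L : ℕ} {Q : ℕ → Prop}

@[simp] lemma relMap_le (v : Fin 2 → Car L Q) :
    Structure.RelMap (L := tau) (TauRel.le : tau.Relations 2) v ↔ toN (v 0) ≤ toN (v 1) := Iff.rfl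

@[simp] lemma relMap_succ (v : Fin 2 → Car L Q) :
    Structure.RelMap (L := tau) (TauRel.succ : tau.Relations 2) v ↔ toN (v 1) = toN (v 0) + 1 := Iff.rfl

@[simp] lemma relMap_pelt (v : Fin 1 → Car L Q) :
    Structure.RelMap (L := tau) (TauRel.pelt : tau.Relations 1) v ↔ Q (toN (v 0)) := Iff.rfl

@[simp] lemma funMap_c (v : Fin 0 → Car L Q) :
    Structure.funMap (L := tau) (TauFun.c : tau.Functions 0) v = mk 0 (Nat.succ_pos L) := rfl

@[simp] lemma funMap_d (v : Fin 0 → Car L Q) :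
    Structure.funMap (L := tau) (TauFun.d : tau.Functions 0) v = mk L (Nat.lt_succ_self L) := rfl

@[simp] lemma const_c :
    (FirstOrder.Language.constantMap (L := tau) (M := Car L Q) TauFun.c) = mk 0 (Nat.succ_pos L) := rfl

@[simp] lemma const_d :
    (FirstOrder.Language.constantMap (L := tau) (M := Car L Q) TauFun.d) = mk L (Nat.lt_succ_self L) := rfl

end Car


section Realize
variable {L : ℕ} {Q : ℕ → Prop}

@[simp] lemma realize_le_rel {n : ℕ} {v : Empty → Car L Q} {xs : Fin n → Car L Q}
    {t₁ t₂ : tau.Term (Empty ⊕ Fin n)} :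
    (Relations.boundedFormula₂ (TauRel.le : tau.Relations 2) t₁ t₂).Realize v xs ↔
      Car.toN (t₁.realize (Sum.elim v xs)) ≤ Car.toN (t₂.realize (Sum.elim v xs)) := Iff.rfl

@[simp] lemma realize_succ_rel {n : ℕ} {v : Empty → Car L Q} {xs : Fin n → Car L Q}
    {t₁ t₂ : tau.Term (Empty ⊕ Fin n)} :
    (Relations.boundedFormula₂ (TauRel.succ : tau.Relations 2) t₁ t₂).Realize v xs ↔
      Car.toN (t₂.realize (Sum.elim v xs)) = Car.toN (t₁.realize (Sum.elim v xs)) + 1 := Iff.rfl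

@[simp] lemma realize_pelt_rel {n : ℕ} {v : Empty → Car L Q} {xs : Fin n → Car L Q}
    {t : tau.Term (Empty ⊕ Fin n)} :
    (Relations.boundedFormula₁ (TauRel.pelt : tau.Relations 1) t).Realize v xs ↔
      Q (Car.toN (t.realize (Sum.elim v xs))) := Iff.rfl

@[simp] lemma realize_c_term {α : Type} {v : α → Car L Q} :
    (Constants.term (L := tau) TauFun.c).realize v = Car.mk 0 (Nat.succ_pos L) := rfl

@[simp] lemma realize_d_term {α : Type} {v : α → Car L Q} :
    (Constants.term (L := tau) TauFun.d).realize v = Car.mk L (Nat.lt_succ_self L) := rfl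

lemma Car.toN_inj {x y : Car L Q} : toN x = toN y ↔ x = y :=
  ⟨Car.ext', fun h => h ▸ rfl⟩

lemma realize_xi1_s9 : (Car L Q) ⊨ xi1 := by
  simp only [xi1, leF, Sentence.Realize, Formula.Realize, BoundedFormula.realize_all,
    BoundedFormula.realize_inf, BoundedFormula.realize_imp, BoundedFormula.realize_sup,
    BoundedFormula.realize_rel₂, BoundedFormula.realize_bdEqual, Term.realize_var, Sum.elim_inr,
    Car.relMap_le, Matrix.cons_val_zero, Matrix.cons_val_one, Matrix.head_cons]
  intro x y z
  simp [Fin.snoc, Function.comp]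
  refine ⟨⟨fun h1 h2 => le_trans h1 h2, fun h1 h2 => Car.ext' (le_antisymm h1 h2)⟩, ?_⟩
  exact le_total _ _

lemma realize_xi2_s9 : (Car L Q) ⊨ xi2 := by
  simp only [xi2, leF, cT, dT, Sentence.Realize, Formula.Realize, BoundedFormula.realize_all,
    BoundedFormula.realize_inf, BoundedFormula.realize_rel₂, Term.realize_var,
    Term.realize_constants, Car.relMap_le, Matrix.cons_val_zero, Matrix.cons_val_one,
    Matrix.head_cons, Sum.elim_inr]
  intro x
  simp [Fin.snoc, Function.comp]
  exact Nat.lt_succ_iff.mp x.toN_lt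

lemma realize_xi3_s9 : (Car L Q) ⊨ xi3 := by
  simp only [xi3, leF, sF, Sentence.Realize, Formula.Realize, BoundedFormula.realize_all,
    BoundedFormula.realize_inf, BoundedFormula.realize_imp, BoundedFormula.realize_sup,
    BoundedFormula.realize_not, BoundedFormula.realize_rel₂, BoundedFormula.realize_bdEqual,
    Term.realize_var, Sum.elim_inr, Car.relMap_le, Car.relMap_succ, Matrix.cons_val_zero,
    Matrix.cons_val_one, Matrix.head_cons]
  intro x y z
  simp [Fin.snoc, Function.comp]
  intro h
  refine ⟨⟨by omega, fun he => by rw [← Car.toN_inj] at he; omega⟩, fun hxz => ?_⟩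
  rcases Nat.lt_or_ge (Car.toN z) (Car.toN x + 1) with h' | h'
  · left; exact Car.ext' (by omega)
  · right; omega

lemma realize_xi4_s9 : (Car L Q) ⊨ xi4 := by
  simp only [xi4, sF, dT, Sentence.Realize, Formula.Realize, BoundedFormula.realize_all,
    BoundedFormula.realize_imp, BoundedFormula.realize_not, BoundedFormula.realize_ex,
    BoundedFormula.realize_bdEqual, BoundedFormula.realize_rel₂, Term.realize_var,
    Term.realize_constants, Sum.elim_inr, Car.relMap_succ, Matrix.cons_val_zero,
    Matrix.cons_val_one, Matrix.head_cons]
  intro x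
  simp [Fin.snoc, Function.comp]
  intro hx
  have hx' : Car.toN x ≠ L := fun h => hx (Car.ext' (by simpa using h))
  have : Car.toN x + 1 < L + 1 := by have := x.toN_lt; omega
  exact ⟨Car.mk (Car.toN x + 1) this, rfl⟩

lemma realize_xi5_iff {k : ℕ} : (Car L Q) ⊨ xi5 k ↔
    ∀ f : Fin (k+1) → Car L Q, (∀ i, Q (Car.toN (f i))) →
      ∃ i j : Fin (k+1), i < j ∧ f i = f j := by
  simp only [xi5, pF, Sentence.Realize, BoundedFormula.realize_alls,
    BoundedFormula.realize_imp, BoundedFormula.realize_foldr_inf,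
    BoundedFormula.realize_foldr_sup, List.mem_ofFn, List.mem_map, List.mem_filter,
    List.mem_product, List.mem_finRange]
  constructor
  · intro h f hf
    obtain ⟨φ, ⟨⟨i, j⟩, hij, rfl⟩, hreal⟩ := h f (by
      rintro φ ⟨i, rfl⟩
      simpa using hf i)
    simp only [BoundedFormula.realize_bdEqual, Term.realize_var, Sum.elim_inr] at hreal
    refine ⟨i, j, by simpa using hij, hreal⟩
  · intro h f hf
    obtain ⟨i, j, hij, hfij⟩ := h f (fun i => by
      have := hf _ ⟨i, rfl⟩
      simpa using this)
    refine ⟨_, ⟨⟨i, j⟩, ?_, rfl⟩, ?_⟩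
    · simpa using hij
    · simpa [BoundedFormula.realize_bdEqual] using hfij

lemma realize_phi_iff_s9 {k : ℕ} : (Car L Q) ⊨ phi k ↔ ¬ ((Car L Q) ⊨ xi5 k) := by
  have h1 := realize_xi1_s9 (L := L) (Q := Q)
  have h2 := realize_xi2_s9 (L := L) (Q := Q)
  have h3 := realize_xi3_s9 (L := L) (Q := Q)
  have h4 := realize_xi4_s9 (L := L) (Q := Q)
  simp only [phi, Sentence.Realize, Formula.Realize, BoundedFormula.realize_inf,
    BoundedFormula.realize_not] at *
  tauto

end Realize

lemma realize_allsFrom {M : Type} [tau.Structure M] (k : ℕ) :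
    ∀ {n : ℕ} (ψ : tau.BoundedFormula Empty (k + n)) (v : Empty → M) (xs : Fin k → M),
      ((allsFrom k ψ).Realize v xs ↔ ∀ ys : Fin n → M, ψ.Realize v (Fin.append xs ys))
  | 0, ψ, v, xs => by
    simp only [allsFrom]
    constructor
    · intro h ys
      rw [Subsingleton.elim ys Fin.elim0, Fin.append_elim0]
      exact h
    · intro h
      have := h Fin.elim0
      rwa [Fin.append_elim0] at this
  | n + 1, ψ, v, xs => by
    rw [allsFrom, realize_allsFrom k ψ.all v xs]
    constructor
    · intro h ys
      have := h (Fin.init ys)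
      rw [BoundedFormula.realize_all] at this
      have h2 := this (ys (Fin.last n))
      rwa [← Fin.append_snoc, Fin.snoc_init_self] at h2
    · intro h ys
      rw [BoundedFormula.realize_all]
      intro a
      rw [← Fin.append_snoc]
      exact h (Fin.snoc ys a)

lemma term_cases {m : ℕ} (t : tau.Term (Empty ⊕ Fin m)) :
    (∃ i : Fin m, t = Term.var (Sum.inr i)) ∨ t = cT ∨ t = dT := by
  cases t with
  | var v =>
    rcases v with e | i
    · exact e.elim
    · exact Or.inl ⟨i, rfl⟩
  | func f ts =>
    cases f with
    | c =>
      refine Or.inr (Or.inl ?_)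
      unfold cT Constants.term
      congr
      funext x
      exact x.elim0
    | d =>
      refine Or.inr (Or.inr ?_)
      unfold dT Constants.term
      congr
      funext x
      exact x.elim0

lemma qf_transfer {M₁ M₂ : Type} [tau.Structure M₁] [tau.Structure M₂] {m : ℕ}
    {v₁ : Empty → M₁} {v₂ : Empty → M₂} {xs₁ : Fin m → M₁} {xs₂ : Fin m → M₂}
    (hEq : ∀ t u : tau.Term (Empty ⊕ Fin m),
      (t.realize (Sum.elim v₁ xs₁) = u.realize (Sum.elim v₁ xs₁) ↔
        t.realize (Sum.elim v₂ xs₂) = u.realize (Sum.elim v₂ xs₂)))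
    (hRel : ∀ (l : ℕ) (R : tau.Relations l) (ts : Fin l → tau.Term (Empty ⊕ Fin m)),
      (Structure.RelMap R (fun i => (ts i).realize (Sum.elim v₁ xs₁)) ↔
        Structure.RelMap R (fun i => (ts i).realize (Sum.elim v₂ xs₂))))
    {φ : tau.BoundedFormula Empty m} (hφ : φ.IsQF) :
    (φ.Realize v₁ xs₁ ↔ φ.Realize v₂ xs₂) := by
  induction hφ with
  | falsum => exact Iff.rfl
  | of_isAtomic h =>
    cases h with
    | equal t u => simpa using hEq t u
    | rel R ts =>
      rw [BoundedFormula.realize_rel, BoundedFormula.realize_rel]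
      exact hRel _ R ts
  | imp h1 h2 ih1 ih2 =>
    rw [BoundedFormula.realize_imp, BoundedFormula.realize_imp, ih1, ih2]


section Comb

/-- generic pigeonhole: some block of `n+1` pairwise disjoint blocks avoids all `n` values -/
lemma exists_free_block {n : ℕ} (w : ℕ) (y : Fin n → ℕ) (start : Fin (n+1) → ℕ)
    (hdisj : ∀ b b' : Fin (n+1), b ≠ b' → ∀ x, start b ≤ x → x ≤ start b + w →
      start b' ≤ x → x ≤ start b' + w → False) :
    ∃ b, ∀ j, ¬(start b ≤ y j ∧ y j ≤ start b + w) := by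
  by_contra hc
  push_neg at hc
  choose ch hch1 hch2 using hc
  have hinj : Function.Injective ch := by
    intro b b' hbb
    by_contra hne
    exact hdisj b b' hne (y (ch b)) (hch1 b) (hch2 b) (hbb ▸ hch1 b') (hbb ▸ hch2 b')
  have := Fintype.card_le_of_injective ch hinj
  simp at this

lemma core (n p D : ℕ) (hD : D = n*(n+3) + 3*n + 13) (hp : D + 2 < p)
    (y : Fin n → ℕ) :
    ∃ F : ℕ → ℕ,
      (∀ u, (u + (D+2) < p ∨ p + (D+2) < u) → F u = u) ∧
      (∀ u w, ((∃ j, y j = u) ∨ u + (D+2) < p ∨ p + (D+2) < u) →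
              ((∃ j, y j = w) ∨ w + (D+2) < p ∨ p + (D+2) < w) →
        ((F u = F w ↔ u = w) ∧ (F u ≤ F w ↔ u ≤ w) ∧ (F w = F u + 1 ↔ w = u + 1))) ∧
      (∀ u, ((∃ j, y j = u) ∨ u + (D+2) < p ∨ p + (D+2) < u) →
        ((F u = u ∧ u ≠ p) ∨
          (p ≤ u + (n+1) ∧ u ≤ p + D ∧ p < F u ∧ F u + 10 ≤ p + D))) := by
  have hq : n ≤ n*(n+3) := Nat.le_mul_of_pos_right n (by omega)
  -- choose l
  obtain ⟨b₁, hb₁⟩ := exists_free_block 0 y (fun m => p - ((m:ℕ)+1)) (by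
    intro b b' hbb x h1 h2 h3 h4
    have hb : (b:ℕ) ≠ (b':ℕ) := fun h => hbb (Fin.ext h)
    have : (b:ℕ) < n+1 := b.isLt
    have : (b':ℕ) < n+1 := b'.isLt
    omega)
  set l : ℕ := p - ((b₁:ℕ)+1) with hl_def
  set s : ℕ := (b₁:ℕ)+1 with hs_def
  have hb₁lt : (b₁:ℕ) < n+1 := b₁.isLt
  have hls : l + s = p := by omega
  have hs1 : 1 ≤ s := by omega
  have hsn : s ≤ n+1 := by omega
  have hl : ∀ j, y j ≠ l := by
    intro j hj
    exact hb₁ j ⟨le_of_eq hj.symm, by omega⟩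
  -- choose g
  obtain ⟨b₂, hb₂⟩ := exists_free_block (s+1) y (fun b => p + 1 + (b:ℕ)*(n+3)) (by
    intro b b' hbb x h1 h2 h3 h4
    have hb : (b:ℕ) ≠ (b':ℕ) := fun h => hbb (Fin.ext h)
    rcases Nat.lt_or_ge (b:ℕ) (b':ℕ) with hlt | hge
    · have : ((b:ℕ)+1)*(n+3) ≤ (b':ℕ)*(n+3) := Nat.mul_le_mul_right _ (by omega)
      have : (b:ℕ)*(n+3) + (n+3) ≤ (b':ℕ)*(n+3) := by
        have he : ((b:ℕ)+1)*(n+3) = (b:ℕ)*(n+3) + (n+3) := by ring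
        omega
      omega
    · have hlt : (b':ℕ) < (b:ℕ) := by omega
      have : ((b':ℕ)+1)*(n+3) ≤ (b:ℕ)*(n+3) := Nat.mul_le_mul_right _ (by omega)
      have : (b':ℕ)*(n+3) + (n+3) ≤ (b:ℕ)*(n+3) := by
        have he : ((b':ℕ)+1)*(n+3) = (b':ℕ)*(n+3) + (n+3) := by ring
        omega
      omega)
  set g : ℕ := p + 1 + (b₂:ℕ)*(n+3) with hg_def
  have hb₂lt : (b₂:ℕ) < n+1 := b₂.isLt
  have hgbound : g + s + 1 + 10 ≤ p + D := by
    have : (b₂:ℕ)*(n+3) ≤ n*(n+3) := Nat.mul_le_mul_right _ (by omega)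
    omega
  have hgp : p + 1 ≤ g := by omega
  have hg : ∀ j, ¬(g ≤ y j ∧ y j ≤ g + s + 1) := hb₂
  refine ⟨fun x => if l < x ∧ x ≤ g then x + s else x, ?_, ?_, ?_⟩
  · intro u hu
    simp only
    rw [if_neg]
    omega
  · intro u w hu hw
    have hu' : (¬(g ≤ u ∧ u ≤ g + s + 1)) ∧ u ≠ l := by
      rcases hu with ⟨j, hj⟩ | hu'
      · exact ⟨hj ▸ hg j, hj ▸ hl j⟩
      · omega
    have hw' : (¬(g ≤ w ∧ w ≤ g + s + 1)) ∧ w ≠ l := by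
      rcases hw with ⟨j, hj⟩ | hw'
      · exact ⟨hj ▸ hg j, hj ▸ hl j⟩
      · omega
    simp only
    refine ⟨?_, ?_, ?_⟩ <;> (split_ifs <;> omega)
  · intro u hu
    have hu' : (¬(g ≤ u ∧ u ≤ g + s + 1)) ∧ u ≠ l := by
      rcases hu with ⟨j, hj⟩ | hu'
      · exact ⟨hj ▸ hg j, hj ▸ hl j⟩
      · omega
    simp only
    split_ifs with h
    · right; omega
    · left; constructor
      · rfl
      · omega

end Comb

lemma realize_efs_iff {M : Type} [tau.Structure M] {k n : ℕ} (ψ : tau.BoundedFormula Empty (k + n)) :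
    M ⊨ existsForallSentence k n ψ ↔
      ∃ xs : Fin k → M, ∀ ys : Fin n → M, ψ.Realize (default : Empty → M) (Fin.append xs ys) := by
  rw [existsForallSentence, Sentence.Realize, BoundedFormula.realize_exs]
  constructor
  · rintro ⟨xs, hxs⟩
    exact ⟨xs, (realize_allsFrom k _ _ _).mp hxs⟩
  · rintro ⟨xs, hxs⟩
    exact ⟨xs, (realize_allsFrom k _ _ _).mpr hxs⟩


/-- **`φ_k` is not equivalent, over the class of all finite `τ`-structures, to any `∃^k∀*`
sentence**: for every `n` and every quantifier-free matrix `β` with `k + n` variables, some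
finite `τ`-structure satisfies exactly one of `φ_k` and `∃x₁…∃x_k ∀y₁…∀y_n β`. -/
theorem phi_not_equivalent_to_exists_k_forall (k n : ℕ)
    (β : tau.BoundedFormula Empty (k + n)) (hβ : β.IsQF) :
    ∃ (M : Type) (_ : tau.Structure M), Finite M ∧ Nonempty M ∧
      Xor' (M ⊨ phi k) (M ⊨ existsForallSentence k n β) := by
  classical
  set D : ℕ := n*(n+3) + 3*n + 13 with hD
  set B : ℕ := 2*D + 5 with hB
  set L : ℕ := (k+3)*B with hL
  have hq : n ≤ n*(n+3) := Nat.le_mul_of_pos_right n (by omega)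
  have hBD : D + 2 < B := by omega
  have hmulLe : ∀ t : Fin (k+1), ((t:ℕ)+1)*B ≤ (k+1)*B :=
    fun t => Nat.mul_le_mul_right _ (by have := t.isLt; omega)
  have hk2L : (k+1)*B + 2*B = L := by rw [hL]; ring
  have hmultL : ∀ t : Fin (k+1), ((t:ℕ)+1)*B < L + 1 := by
    intro t
    have := hmulLe t
    omega
  set Q : ℕ → Prop := fun x => ∃ t : Fin (k+1), x = ((t:ℕ)+1)*B with hQ
  -- φ holds in Car L Q
  have hphiM : (Car L Q) ⊨ phi k := by
    rw [realize_phi_iff_s9, realize_xi5_iff]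
    intro hcon
    obtain ⟨i, j, hij, hf⟩ := hcon (fun t => Car.mk (((t:ℕ)+1)*B) (hmultL t))
      (fun t => ⟨t, rfl⟩)
    have hv : ((i:ℕ)+1)*B = ((j:ℕ)+1)*B := by
      have := congrArg Car.toN hf
      simpa using this
    have : (i:ℕ)+1 = (j:ℕ)+1 := Nat.eq_of_mul_eq_mul_right (by omega) hv
    have : (i:ℕ) < (j:ℕ) := hij
    omega
  by_cases hsig : (Car L Q) ⊨ existsForallSentence k n β
  swap
  · exact ⟨Car L Q, inferInstance, inferInstanceAs (Finite (Fin (L+1))),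
      ⟨Car.mk 0 (Nat.succ_pos L)⟩, Or.inl ⟨hphiM, hsig⟩⟩
  -- extract witnesses
  rw [realize_efs_iff] at hsig
  obtain ⟨a, ha⟩ := hsig
  -- choose the far center t₀
  obtain ⟨t₀, ht₀⟩ := exists_free_block (n := k) (2*(D+2)) (fun i => Car.toN (a i))
    (fun t => ((t:ℕ)+1)*B - (D+2)) (by
      intro t t' htt x h1 h2 h3 h4
      have hb : (t:ℕ) ≠ (t':ℕ) := fun h => htt (Fin.ext h)
      rcases Nat.lt_or_ge (t:ℕ) (t':ℕ) with hlt | hge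
      · have h5 : ((t:ℕ)+2)*B ≤ ((t':ℕ)+1)*B := Nat.mul_le_mul_right _ (by omega)
        have h6 : ((t:ℕ)+2)*B = ((t:ℕ)+1)*B + B := by ring
        have h7 : B ≤ ((t:ℕ)+1)*B := Nat.le_mul_of_pos_left B (by omega)
        have h8 : B ≤ ((t':ℕ)+1)*B := Nat.le_mul_of_pos_left B (by omega)
        omega
      · have hlt : (t':ℕ) < (t:ℕ) := by omega
        have h5 : ((t':ℕ)+2)*B ≤ ((t:ℕ)+1)*B := Nat.mul_le_mul_right _ (by omega)
        have h6 : ((t':ℕ)+2)*B = ((t':ℕ)+1)*B + B := by ring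
        have h7 : B ≤ ((t:ℕ)+1)*B := Nat.le_mul_of_pos_left B (by omega)
        have h8 : B ≤ ((t':ℕ)+1)*B := Nat.le_mul_of_pos_left B (by omega)
        omega)
  set p : ℕ := ((t₀:ℕ)+1)*B with hp_def
  have hpB : B ≤ p := Nat.le_mul_of_pos_left B (by omega)
  have hpk : p ≤ (k+1)*B := hmulLe t₀
  have hfar : ∀ i, Car.toN (a i) + (D+2) < p ∨ p + (D+2) < Car.toN (a i) := by
    intro i
    have := ht₀ i
    omega
  have hpD : D + 2 < p := by omega
  -- multiple comparison helpers
  have hmlt : ∀ t : Fin (k+1), (t:ℕ) < (t₀:ℕ) → ((t:ℕ)+1)*B + B ≤ p := by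
    intro t ht
    have h5 : ((t:ℕ)+2)*B ≤ ((t₀:ℕ)+1)*B := Nat.mul_le_mul_right _ (by omega)
    have h6 : ((t:ℕ)+2)*B = ((t:ℕ)+1)*B + B := by ring
    omega
  have hmle : ∀ t : Fin (k+1), (t:ℕ) ≤ (t₀:ℕ) → ((t:ℕ)+1)*B ≤ p := by
    intro t ht
    exact Nat.mul_le_mul_right _ (by omega)
  have hmgt : ∀ t : Fin (k+1), (t₀:ℕ) < (t:ℕ) → p + B ≤ ((t:ℕ)+1)*B := by
    intro t ht
    have h5 : ((t₀:ℕ)+2)*B ≤ ((t:ℕ)+1)*B := Nat.mul_le_mul_right _ (by omega)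
    have h6 : ((t₀:ℕ)+2)*B = p + B := by rw [hp_def]; ring
    omega
  set Q'' : ℕ → Prop := fun x => ∃ t : Fin (k+1), (t:ℕ) ≠ (t₀:ℕ) ∧ x = ((t:ℕ)+1)*B with hQ''
  -- φ fails in Car L Q''
  have hphiM'' : ¬ ((Car L Q'') ⊨ phi k) := by
    rw [realize_phi_iff_s9, not_not, realize_xi5_iff]
    intro f hf
    have hch : ∀ i, ∃ t : Fin (k+1), (t:ℕ) ≠ (t₀:ℕ) ∧ Car.toN (f i) = ((t:ℕ)+1)*B := by
      intro i
      exact hf i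
    choose ch hch1 hch2 using hch
    have hcard : Fintype.card {t : Fin (k+1) // t ≠ t₀} < Fintype.card (Fin (k+1)) := by
      rw [Fintype.card_subtype_compl, Fintype.card_subtype_eq]
      simp
    obtain ⟨i, j, hij, hchij⟩ := Fintype.exists_ne_map_eq_of_card_lt
      (fun i => (⟨ch i, fun h => hch1 i (by rw [h])⟩ : {t : Fin (k+1) // t ≠ t₀})) hcard
    have hfij : f i = f j := by
      apply Car.ext'
      rw [hch2 i, hch2 j]
      have : ch i = ch j := congrArg Subtype.val hchij
      rw [this]
    rcases lt_or_gt_of_ne hij with h | h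
    · exact ⟨i, j, h, hfij⟩
    · exact ⟨j, i, h, hfij.symm⟩
  -- σ holds in Car L Q''
  have hsig'' : (Car L Q'') ⊨ existsForallSentence k n β := by
    rw [realize_efs_iff]
    refine ⟨fun i => Car.mk (Car.toN (a i)) ((a i).toN_lt), ?_⟩
    intro ys
    set y : Fin n → ℕ := fun j => Car.toN (ys j) with hy
    obtain ⟨F, hFfix, hFcmp, hFq⟩ := core n p D hD hpD y
    set xs₂ : Fin (k+n) → Car L Q'' :=
      Fin.append (fun i => Car.mk (Car.toN (a i)) ((a i).toN_lt)) ys with hxs₂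
    have hval₂ : ∀ i : Fin (k+n), (∃ j, y j = Car.toN (xs₂ i)) ∨
        Car.toN (xs₂ i) + (D+2) < p ∨ p + (D+2) < Car.toN (xs₂ i) := by
      intro i
      refine Fin.addCases (motive := fun i => (∃ j, y j = Car.toN (xs₂ i)) ∨
        Car.toN (xs₂ i) + (D+2) < p ∨ p + (D+2) < Car.toN (xs₂ i)) ?_ ?_ i
      · intro i0
        rw [hxs₂, Fin.append_left]
        have := hfar i0
        simp only [Car.toN_mk]
        omega
      · intro j0
        rw [hxs₂, Fin.append_right]
        exact Or.inl ⟨j0, rfl⟩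
    have hbnd : ∀ i, F (Car.toN (xs₂ i)) < L + 1 := by
      intro i
      rcases hFq _ (hval₂ i) with ⟨h1, _⟩ | ⟨_, _, _, h4⟩
      · rw [h1]; exact (xs₂ i).toN_lt
      · omega
    set xs₁ : Fin (k+n) → Car L Q := fun i => Car.mk (F (Car.toN (xs₂ i))) (hbnd i) with hxs₁
    have hterm : ∀ t : tau.Term (Empty ⊕ Fin (k+n)),
        Car.toN (t.realize (Sum.elim (default : Empty → Car L Q) xs₁)) =
          F (Car.toN (t.realize (Sum.elim (default : Empty → Car L Q'') xs₂))) ∧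
        ((∃ j, y j = Car.toN (t.realize (Sum.elim (default : Empty → Car L Q'') xs₂))) ∨
          Car.toN (t.realize (Sum.elim (default : Empty → Car L Q'') xs₂)) + (D+2) < p ∨
          p + (D+2) < Car.toN (t.realize (Sum.elim (default : Empty → Car L Q'') xs₂))) := by
      intro t
      rcases term_cases t with ⟨i, rfl⟩ | rfl | rfl
      · simp only [Term.realize_var, Sum.elim_inr]
        exact ⟨rfl, hval₂ i⟩
      · have h0 : F 0 = 0 := hFfix 0 (Or.inl (by omega))
        constructor
        · simp [cT, Car.const_c, h0]
        · simp only [cT, Term.realize_constants, Car.const_c, realize_c_term, Car.toN_mk]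
          omega
      · have hL0 : F L = L := hFfix L (Or.inr (by omega))
        constructor
        · simp [dT, Car.const_d, hL0]
        · simp only [dT, Term.realize_constants, Car.const_d, realize_d_term, Car.toN_mk]
          omega
    have hEq : ∀ t u : tau.Term (Empty ⊕ Fin (k+n)),
        (t.realize (Sum.elim (default : Empty → Car L Q) xs₁) =
            u.realize (Sum.elim (default : Empty → Car L Q) xs₁) ↔
          t.realize (Sum.elim (default : Empty → Car L Q'') xs₂) =
            u.realize (Sum.elim (default : Empty → Car L Q'') xs₂)) := by
      intro t u
      obtain ⟨ht1, ht2⟩ := hterm t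
      obtain ⟨hu1, hu2⟩ := hterm u
      rw [← Car.toN_inj, ← Car.toN_inj, ht1, hu1]
      exact (hFcmp _ _ ht2 hu2).1
    have hRel : ∀ (l : ℕ) (R : tau.Relations l) (ts : Fin l → tau.Term (Empty ⊕ Fin (k+n))),
        (Structure.RelMap R (fun i => (ts i).realize (Sum.elim (default : Empty → Car L Q) xs₁)) ↔
          Structure.RelMap R (fun i => (ts i).realize (Sum.elim (default : Empty → Car L Q'') xs₂))) := by
      intro l R ts
      cases R with
      | le =>
        rw [Car.relMap_le, Car.relMap_le]
        obtain ⟨h01, h02⟩ := hterm (ts 0)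
        obtain ⟨h11, h12⟩ := hterm (ts 1)
        rw [h01, h11]
        exact (hFcmp _ _ h02 h12).2.1
      | succ =>
        rw [Car.relMap_succ, Car.relMap_succ]
        obtain ⟨h01, h02⟩ := hterm (ts 0)
        obtain ⟨h11, h12⟩ := hterm (ts 1)
        rw [h01, h11]
        exact (hFcmp _ _ h02 h12).2.2
      | pelt =>
        rw [Car.relMap_pelt, Car.relMap_pelt]
        obtain ⟨h01, h02⟩ := hterm (ts 0)
        rw [h01]
        rcases hFq _ h02 with ⟨hFe, hne⟩ | ⟨h1, h2, h3, h4⟩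
        · rw [hFe]
          constructor
          · rintro ⟨t, ht⟩
            refine ⟨t, ?_, ht⟩
            intro hc
            apply hne
            rw [ht, hp_def, hc]
          · rintro ⟨t, _, ht⟩
            exact ⟨t, ht⟩
        · constructor
          · rintro ⟨t, ht⟩
            exfalso
            rcases Nat.lt_trichotomy (t:ℕ) (t₀:ℕ) with hc | hc | hc
            · have := hmle t (le_of_lt hc); omega
            · rw [hc] at ht; omega
            · have := hmgt t hc; omega
          · rintro ⟨t, htne, ht⟩
            exfalso
            rcases Nat.lt_trichotomy (t:ℕ) (t₀:ℕ) with hc | hc | hc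
            · have := hmlt t hc; omega
            · exact htne hc
            · have := hmgt t hc; omega
    have htrans := qf_transfer (v₁ := (default : Empty → Car L Q))
      (v₂ := (default : Empty → Car L Q'')) (xs₁ := xs₁) (xs₂ := xs₂) hEq hRel hβ
    rw [← htrans]
    have hbnd' : ∀ j, F (y j) < L + 1 := by
      intro j
      rcases hFq (y j) (Or.inl ⟨j, rfl⟩) with ⟨h1, _⟩ | ⟨_, _, _, h4⟩
      · rw [h1]; exact (ys j).toN_lt
      · omega
    have hxs₁eq : xs₁ = Fin.append a (fun j => Car.mk (F (y j)) (hbnd' j)) := by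
      funext i
      refine Fin.addCases (motive := fun i =>
        xs₁ i = Fin.append a (fun j => Car.mk (F (y j)) (hbnd' j)) i) ?_ ?_ i
      · intro i0
        rw [Fin.append_left, hxs₁]
        apply Car.ext'
        simp only [Car.toN_mk]
        rw [hxs₂, Fin.append_left]
        simp only [Car.toN_mk]
        exact hFfix _ (hfar i0)
      · intro j0
        rw [Fin.append_right, hxs₁]
        apply Car.ext'
        simp only [Car.toN_mk]
        rw [hxs₂, Fin.append_right]
    rw [hxs₁eq]
    exact ha _
  exact ⟨Car L Q'', inferInstance, inferInstanceAs (Finite (Fin (L+1))),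
    ⟨Car.mk 0 (Nat.succ_pos L)⟩, Or.inr ⟨hsig'', hphiM''⟩⟩


end LTFinite
end
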